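/- Validity of the flow-balance and capacity constraints of the aggregated formulation: let (H, E', {P^r}) be a feasible MA-GHLP solution, i.e., each commodity r is routed along a consistent r-path P^r. Define z_i = 1 iff i ∈ H, y_{km} = 1 iff km ∈ E', x¹_{ij} = 1 iff some P^r uses (i,j) as an access arc, x²_{ij} = 1 iff some P^r uses (i,j) as a distribution arc, and let h¹_{ij}, t_{ij}, h²_{ij} be the total demand routed on arc (i,j) as access, interhub and distribution arc, respectively. Then: (a) Σ_{j≠i} h¹_{ij} = (1−z_i) O_i and Σ_{j≠i} h²_{ji} = (1−z_i) D_i for every i ∈ V; (b) O_i z_i + Σ_{j≠i}(h¹_{ji} + t_{ji}) = D_i z_i + Σ_{j≠i}(h²_{ij} + t_{ij}) for every i ∈ V; (c) h¹_{ij} ≤ O_i x¹_{ij} and h²_{ij} ≤ D_j x²_{ij} for every arc (i,j) ∈ A; and (d) t_{km} + t_{mk} ≤ W̄ y_{km} for every edge km ∈ E. -/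

import Mathlib

open scoped Classical
open Finset

/-- A consistent r-path, given by its list `ks` of intermediate hubs, for a
commodity with origin `a` and destination `b`, in the design solution with hub
set `H` and interhub edge set `E'` (encoded as a set of ordered pairs of
distinct hubs, closed under swapping). -/
def IsRPath {n : ℕ} (H : Finset (Fin n)) (E' : Finset (Fin n × Fin n))
    (a b : Fin n) (ks : List (Fin n)) : Prop :=
  ks ≠ [] ∧ ks.Nodup ∧ (∀ k ∈ ks, k ∈ H) ∧
    ks.Chain' (fun x y => (x, y) ∈ E') ∧
    (a ∈ H → ks.head? = some a) ∧ (b ∈ H → ks.getLast? = some b)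

/-- `h¹_{ij}`: total demand routed on arc `(i, j)` as an access arc by the
family of r-paths `P`. -/
def accessFlow {n : ℕ} {R : Type} [Fintype R] (H : Finset (Fin n))
    (o : R → Fin n) (w : R → ℝ) (P : R → List (Fin n)) (i j : Fin n) : ℝ :=
  ∑ r, if o r ∉ H ∧ o r = i ∧ (P r).headD (o r) = j then w r else 0

/-- `t_{ij}`: total demand routed on arc `(i, j)` as an interhub arc by the
family of r-paths `P`. -/
def interFlow {n : ℕ} {R : Type} [Fintype R]
    (w : R → ℝ) (P : R → List (Fin n)) (i j : Fin n) : ℝ :=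
  ∑ r, if (i, j) ∈ (P r).zip (P r).tail then w r else 0

/-- `h²_{ij}`: total demand routed on arc `(i, j)` as a distribution arc by the
family of r-paths `P`. -/
def distFlow {n : ℕ} {R : Type} [Fintype R] (H : Finset (Fin n))
    (d : R → Fin n) (w : R → ℝ) (P : R → List (Fin n)) (i j : Fin n) : ℝ :=
  ∑ r, if d r ∉ H ∧ d r = j ∧ (P r).getLastD (d r) = i then w r else 0

/-- `O_i`: total demand with origin at `i`. -/
def Odem {n : ℕ} {R : Type} [Fintype R] (o : R → Fin n) (w : R → ℝ)
    (i : Fin n) : ℝ :=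
  ∑ r, if o r = i then w r else 0

/-- `D_i`: total demand with destination at `i`. -/
def Ddem {n : ℕ} {R : Type} [Fintype R] (d : R → Fin n) (w : R → ℝ)
    (i : Fin n) : ℝ :=
  ∑ r, if d r = i then w r else 0


open scoped Classical
open Finset

section AuxMAGHLP

variable {α : Type*}

lemma mem_zip_tail_iff {a b : α} : ∀ {l : List α},
    (a, b) ∈ l.zip l.tail ↔ ∃ t, l[t]? = some a ∧ l[t + 1]? = some b := by
  intro l
  induction l with
  | nil => simp
  | cons x xs ih =>
    cases xs with
    | nil => simp
    | cons y ys =>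
      show (a, b) ∈ (x, y) :: ((y :: ys).zip (y :: ys).tail) ↔ _
      rw [List.mem_cons, ih]
      constructor
      · rintro (h | ⟨t, h1, h2⟩)
        · obtain ⟨h1, h2⟩ := Prod.ext_iff.1 h
          simp only at h1 h2
          subst h1; subst h2
          exact ⟨0, rfl, by simp⟩
        · exact ⟨t + 1, by simpa using h1, by simpa using h2⟩
      · rintro ⟨t, h1, h2⟩
        cases t with
        | zero =>
          simp only [List.getElem?_cons_zero, List.getElem?_cons_succ,
            List.getElem?_cons_zero, Option.some_inj] at h1 h2
          left; simp [Prod.ext_iff, ← h1, ← h2]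
        | succ s =>
          right
          exact ⟨s, by simpa using h1, by simpa using h2⟩

lemma index_lt_of_getElem? {l : List α} {t : ℕ} {a : α} (h : l[t]? = some a) :
    t < l.length := by
  rcases List.getElem?_eq_some_iff.1 h with ⟨h', _⟩; exact h'

lemma pred_unique {l : List α} (hnd : l.Nodup) {j j' i : α}
    (h : (j, i) ∈ l.zip l.tail) (h' : (j', i) ∈ l.zip l.tail) : j = j' := by
  obtain ⟨t, h1, h2⟩ := mem_zip_tail_iff.1 h
  obtain ⟨t', h1', h2'⟩ := mem_zip_tail_iff.1 h'
  have het : t + 1 = t' + 1 :=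
    (List.getElem?_inj (index_lt_of_getElem? h2) hnd).1 (h2.trans h2'.symm)
  have ht : t = t' := by omega
  subst ht
  rw [h1] at h1'
  exact Option.some_injective _ h1'

lemma succ_unique {l : List α} (hnd : l.Nodup) {j j' i : α}
    (h : (i, j) ∈ l.zip l.tail) (h' : (i, j') ∈ l.zip l.tail) : j = j' := by
  obtain ⟨t, h1, h2⟩ := mem_zip_tail_iff.1 h
  obtain ⟨t', h1', h2'⟩ := mem_zip_tail_iff.1 h'
  have het : t = t' :=
    (List.getElem?_inj (index_lt_of_getElem? h1) hnd).1 (h1.trans h1'.symm)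
  subst het
  rw [h2] at h2'
  exact Option.some_injective _ h2'

lemma zip_tail_ne {l : List α} (hnd : l.Nodup) {a b : α}
    (h : (a, b) ∈ l.zip l.tail) : a ≠ b := by
  obtain ⟨t, h1, h2⟩ := mem_zip_tail_iff.1 h
  intro hab
  subst hab
  have := (List.getElem?_inj (index_lt_of_getElem? h1) hnd).1 (h1.trans h2.symm)
  omega

lemma not_both_zip {l : List α} (hnd : l.Nodup) {a b : α}
    (h : (a, b) ∈ l.zip l.tail) (h' : (b, a) ∈ l.zip l.tail) : False := by
  obtain ⟨t, h1, h2⟩ := mem_zip_tail_iff.1 h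
  obtain ⟨t', h1', h2'⟩ := mem_zip_tail_iff.1 h'
  have e1 : t = t' + 1 :=
    (List.getElem?_inj (index_lt_of_getElem? h1) hnd).1 (h1.trans h2'.symm)
  have e2 : t + 1 = t' :=
    (List.getElem?_inj (index_lt_of_getElem? h2) hnd).1 (h2.trans h1'.symm)
  omega

lemma mem_tail_exists {l : List α} {i : α} (h : i ∈ l.tail) :
    ∃ j, (j, i) ∈ l.zip l.tail := by
  obtain ⟨t, ht⟩ := List.mem_iff_getElem?.1 h
  have h2 : l[t + 1]? = some i := by
    rw [← List.drop_one, List.getElem?_drop] at ht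
    simpa [Nat.add_comm] using ht
  have hlt : t < l.length := by have := index_lt_of_getElem? h2; omega
  exact ⟨l[t], mem_zip_tail_iff.2 ⟨t, by simp [hlt], h2⟩⟩

lemma mem_dropLast_exists {l : List α} {i : α} (h : i ∈ l.dropLast) :
    ∃ j, (i, j) ∈ l.zip l.tail := by
  obtain ⟨t, ht, he⟩ := List.mem_iff_getElem.1 h
  have hlt : t + 1 < l.length := by
    have := l.length_dropLast; omega
  refine ⟨l[t + 1], mem_zip_tail_iff.2 ⟨t, ?_, by simp [hlt]⟩⟩
  rw [List.getElem?_eq_getElem (by omega)]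
  rw [List.getElem_dropLast] at he
  simp [he]

lemma fst_mem_dropLast {l : List α} {i j : α} (h : (i, j) ∈ l.zip l.tail) :
    i ∈ l.dropLast := by
  obtain ⟨t, h1, h2⟩ := mem_zip_tail_iff.1 h
  have hlt : t + 1 < l.length := index_lt_of_getElem? h2
  have ht : t < l.dropLast.length := by rw [List.length_dropLast]; omega
  have : l.dropLast[t] = i := by
    rw [List.getElem_dropLast]
    obtain ⟨_, e⟩ := List.getElem?_eq_some_iff.1 h1
    exact e
  exact this ▸ List.getElem_mem ht

lemma chain'_rel_of_mem_zip {R : α → α → Prop} {l : List α} (hc : l.Chain' R)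
    {a b : α} (h : (a, b) ∈ l.zip l.tail) : R a b := by
  obtain ⟨t, h1, h2⟩ := mem_zip_tail_iff.1 h
  have hlt : t + 1 < l.length := index_lt_of_getElem? h2
  have hr := List.isChain_iff_getElem.1 hc t (by omega)
  obtain ⟨_, e1⟩ := List.getElem?_eq_some_iff.1 h1
  obtain ⟨_, e2⟩ := List.getElem?_eq_some_iff.1 h2
  rwa [e1, e2] at hr

lemma headD_mem {l : List α} (h : l ≠ []) (d : α) : l.headD d ∈ l := by
  cases l with
  | nil => exact absurd rfl h
  | cons x xs => simp

lemma getLastD_mem {l : List α} (h : l ≠ []) (d : α) : l.getLastD d ∈ l := by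
  have : l.getLastD d = l.reverse.headD d := by
    rw [List.headD_eq_head?, List.head?_reverse, List.getLastD_eq_getLast?]
  rw [this, ← List.mem_reverse]
  exact headD_mem (by simpa using h) d

lemma sum_if_unique {β : Type*} {s : Finset β} (p : β → Prop) [DecidablePred p] (w : ℝ) [Decidable (∃ j ∈ s, p j)]
    (huniq : ∀ a ∈ s, ∀ b ∈ s, p a → p b → a = b) :
    (∑ j ∈ s, if p j then w else 0) = if ∃ j ∈ s, p j then w else 0 := by
  by_cases h : ∃ j ∈ s, p j
  · obtain ⟨j0, hj0, hpj0⟩ := h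
    rw [if_pos ⟨j0, hj0, hpj0⟩,
      Finset.sum_eq_single_of_mem j0 hj0 (fun b hb hne => if_neg
        (fun hpb => hne (huniq b hb j0 hj0 hpb hpj0))), if_pos hpj0]
  · rw [if_neg h]
    exact Finset.sum_eq_zero fun j hj => if_neg fun hp => h ⟨j, hj, hp⟩



variable {n : ℕ}

lemma side_eq (H : Finset (Fin n)) (i a : Fin n) (w : ℝ) (ks : List (Fin n))
    (hne : ks ≠ []) (hnd : ks.Nodup) (hsub : ∀ k ∈ ks, k ∈ H)
    (hhead : a ∈ H → ks.head? = some a) :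
    ((if a = i then w else 0) * (if i ∈ H then (1 : ℝ) else 0) +
      ((if a ∉ H ∧ a ≠ i ∧ ks.headD a = i then w else 0) +
        (if i ∈ ks.tail then w else 0))) = if i ∈ ks then w else 0 := by
  obtain ⟨x, xs, rfl⟩ := List.exists_cons_of_ne_nil hne
  have hxH : x ∈ H := hsub x (List.mem_cons_self)
  have hxnotmem : x ∉ xs := (List.nodup_cons.1 hnd).1
  have hheadx : a ∈ H → x = a := fun ha => by
    have := hhead ha; simpa using this
  by_cases hix : i = x
  · subst hix
    by_cases hax : a = i
    · subst hax
      simp [hxH, hxnotmem]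
    · have haH : a ∉ H := fun ha => hax ((hheadx ha).symm)
      simp [hax, haH, hxnotmem, Ne.symm hax]
  · by_cases hmem : i ∈ xs
    · have hiH : i ∈ H := hsub i (List.mem_cons_of_mem _ hmem)
      have hai : a ≠ i := fun hae => hix ((hheadx (hae ▸ hiH)).symm ▸ hae.symm)
      simp [hmem, hai, Ne.symm hix, hix]
    · by_cases hax : a = i
      · subst hax
        have hiH : a ∉ H := fun ha => hix (hheadx ha).symm
        simp [hiH, Ne.symm hix, hmem, hix]
      · simp [hax, Ne.symm hix, hmem, hix]

lemma balance_r (H : Finset (Fin n)) (i a b : Fin n) (w : ℝ) (ks : List (Fin n))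
    (hne : ks ≠ []) (hnd : ks.Nodup) (hsub : ∀ k ∈ ks, k ∈ H)
    (hhead : a ∈ H → ks.head? = some a) (hlast : b ∈ H → ks.getLast? = some b) :
    ((if a = i then w else 0) * (if i ∈ H then (1 : ℝ) else 0) +
      ((if a ∉ H ∧ a ≠ i ∧ ks.headD a = i then w else 0) +
        (if i ∈ ks.tail then w else 0))) =
    ((if b = i then w else 0) * (if i ∈ H then (1 : ℝ) else 0) +
      ((if b ∉ H ∧ b ≠ i ∧ ks.getLastD b = i then w else 0) +
        (if i ∈ ks.dropLast then w else 0))) := by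
  rw [side_eq H i a w ks hne hnd hsub hhead]
  have hrev := side_eq H i b w ks.reverse (by simpa using hne)
    (List.nodup_reverse.2 hnd) (fun k hk => hsub k (List.mem_reverse.1 hk))
    (fun hb => by rw [List.head?_reverse]; exact hlast hb)
  rw [List.headD_eq_head?, List.head?_reverse, ← List.getLastD_eq_getLast?,
    List.tail_reverse] at hrev
  simp only [List.mem_reverse] at hrev
  exact hrev.symm

lemma side_eq' (H : Finset (Fin n)) (i b : Fin n) (w : ℝ) (ks : List (Fin n))
    (hne : ks ≠ []) (hnd : ks.Nodup) (hsub : ∀ k ∈ ks, k ∈ H)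
    (hlast : b ∈ H → ks.getLast? = some b) :
    ((if b = i then w else 0) * (if i ∈ H then (1 : ℝ) else 0) +
      ((if b ∉ H ∧ b ≠ i ∧ ks.getLastD b = i then w else 0) +
        (if i ∈ ks.dropLast then w else 0))) = if i ∈ ks then w else 0 := by
  have hrev := side_eq H i b w ks.reverse (by simpa using hne)
    (List.nodup_reverse.2 hnd) (fun k hk => hsub k (List.mem_reverse.1 hk))
    (fun hb => by rw [List.head?_reverse]; exact hlast hb)
  rw [List.headD_eq_head?, List.head?_reverse, ← List.getLastD_eq_getLast?,
    List.tail_reverse] at hrev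
  simpa only [List.mem_reverse] using hrev

end AuxMAGHLP

/-- Validity of the flow-balance and capacity constraints of the aggregated
formulation for a feasible MA-GHLP solution `(H, E', P)`, where
`z_i = 1` iff `i ∈ H`, `y_{km} = 1` iff `km ∈ E'`,
`x¹_{ij} = 1` iff some `P^r` uses `(i,j)` as an access arc and
`x²_{ij} = 1` iff some `P^r` uses `(i,j)` as a distribution arc:
(a) flow balance at non-hub nodes, (b) flow balance at hub nodes,
(c) the access and distribution flow bounds, and (d) the interhub capacity
constraints. -/
theorem statement4 {n : ℕ} (hn : 2 ≤ n) {R : Type} [Fintype R]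
    (o d : R → Fin n) (hod : ∀ r, o r ≠ d r)
    (w : R → ℝ) (hw : ∀ r, 0 ≤ w r)
    (hinj : Function.Injective fun r => (o r, d r))
    (H : Finset (Fin n)) (hH : H.Nonempty)
    (E' : Finset (Fin n × Fin n))
    (hE' : ∀ p ∈ E', p.1 ≠ p.2 ∧ p.1 ∈ H ∧ p.2 ∈ H ∧ (p.2, p.1) ∈ E')
    (P : R → List (Fin n)) (hP : ∀ r, IsRPath H E' (o r) (d r) (P r)) :
    (∀ i : Fin n,
      (∑ j ∈ univ.filter (fun j => j ≠ i), accessFlow H o w P i j) =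
        (1 - if i ∈ H then (1 : ℝ) else 0) * Odem o w i ∧
      (∑ j ∈ univ.filter (fun j => j ≠ i), distFlow H d w P j i) =
        (1 - if i ∈ H then (1 : ℝ) else 0) * Ddem d w i) ∧
    (∀ i : Fin n,
      Odem o w i * (if i ∈ H then (1 : ℝ) else 0) +
          (∑ j ∈ univ.filter (fun j => j ≠ i),
            (accessFlow H o w P j i + interFlow w P j i)) =
        Ddem d w i * (if i ∈ H then (1 : ℝ) else 0) +
          (∑ j ∈ univ.filter (fun j => j ≠ i),
            (distFlow H d w P i j + interFlow w P i j))) ∧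
    (∀ i j : Fin n, i ≠ j →
      accessFlow H o w P i j ≤
        Odem o w i *
          (if ∃ r, o r ∉ H ∧ o r = i ∧ (P r).headD (o r) = j then (1 : ℝ) else 0) ∧
      distFlow H d w P i j ≤
        Ddem d w j *
          (if ∃ r, d r ∉ H ∧ d r = j ∧ (P r).getLastD (d r) = i then (1 : ℝ) else 0)) ∧
    (∀ k m : Fin n, k ≠ m →
      interFlow w P k m + interFlow w P m k ≤
        (∑ r, w r) * (if (k, m) ∈ E' then (1 : ℝ) else 0)) := by
  have hne : ∀ r, P r ≠ [] := fun r => (hP r).1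
  have hnd : ∀ r, (P r).Nodup := fun r => (hP r).2.1
  have hsub : ∀ r, ∀ k ∈ P r, k ∈ H := fun r => (hP r).2.2.1
  have hch : ∀ r, (P r).Chain' (fun x y => (x, y) ∈ E') := fun r => (hP r).2.2.2.1
  have hhead : ∀ r, o r ∈ H → (P r).head? = some (o r) :=
    fun r => (hP r).2.2.2.2.1
  have hlast : ∀ r, d r ∈ H → (P r).getLast? = some (d r) :=
    fun r => (hP r).2.2.2.2.2
  refine ⟨?_, ?_, ?_, ?_⟩
  · -- part (a)
    intro i
    constructor
    · -- access
      simp only [accessFlow]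
      rw [Finset.sum_comm]
      have hper : ∀ r : R,
          (∑ j ∈ univ.filter (fun j => j ≠ i),
            if o r ∉ H ∧ o r = i ∧ (P r).headD (o r) = j then w r else 0) =
          if o r ∉ H ∧ o r = i then w r else 0 := by
        intro r
        refine (sum_if_unique (fun j => o r ∉ H ∧ o r = i ∧ (P r).headD (o r) = j) (w r)
          (fun a _ b _ hpa hpb => hpa.2.2.symm.trans hpb.2.2)).trans
          (if_congr ⟨?_, ?_⟩ rfl rfl)
        · rintro ⟨j, _, hc⟩; exact ⟨hc.1, hc.2.1⟩
        · rintro ⟨hoH, hoi⟩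
          refine ⟨(P r).headD (o r),
            Finset.mem_filter.2 ⟨Finset.mem_univ _, ?_⟩, hoH, hoi, rfl⟩
          intro he
          exact hoH (by rw [hoi]; exact he ▸ hsub r _ (headD_mem (hne r) (o r)))
      rw [Finset.sum_congr rfl (fun r _ => hper r)]
      simp only [Odem, Finset.mul_sum]
      refine Finset.sum_congr rfl fun r _ => ?_
      by_cases hi : i ∈ H
      · simp only [hi, if_true, sub_self, zero_mul]
        exact if_neg (fun h => h.1 (h.2 ▸ hi))
      · simp only [hi, if_false, sub_zero, one_mul]
        exact if_congr ⟨fun h => h.2, fun h => ⟨h ▸ hi, h⟩⟩ rfl rfl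
    · -- distribution
      simp only [distFlow]
      rw [Finset.sum_comm]
      have hper : ∀ r : R,
          (∑ j ∈ univ.filter (fun j => j ≠ i),
            if d r ∉ H ∧ d r = i ∧ (P r).getLastD (d r) = j then w r else 0) =
          if d r ∉ H ∧ d r = i then w r else 0 := by
        intro r
        refine (sum_if_unique (fun j => d r ∉ H ∧ d r = i ∧ (P r).getLastD (d r) = j) (w r)
          (fun a _ b _ hpa hpb => hpa.2.2.symm.trans hpb.2.2)).trans
          (if_congr ⟨?_, ?_⟩ rfl rfl)
        · rintro ⟨j, _, hc⟩; exact ⟨hc.1, hc.2.1⟩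
        · rintro ⟨hdH, hdi⟩
          refine ⟨(P r).getLastD (d r),
            Finset.mem_filter.2 ⟨Finset.mem_univ _, ?_⟩, hdH, hdi, rfl⟩
          intro he
          exact hdH (by rw [hdi]; exact he ▸ hsub r _ (getLastD_mem (hne r) (d r)))
      rw [Finset.sum_congr rfl (fun r _ => hper r)]
      simp only [Ddem, Finset.mul_sum]
      refine Finset.sum_congr rfl fun r _ => ?_
      by_cases hi : i ∈ H
      · simp only [hi, if_true, sub_self, zero_mul]
        exact if_neg (fun h => h.1 (h.2 ▸ hi))
      · simp only [hi, if_false, sub_zero, one_mul]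
        exact if_congr ⟨fun h => h.2, fun h => ⟨h ▸ hi, h⟩⟩ rfl rfl
  · -- part (b)
    intro i
    have eacc : ∀ r : R,
        (∑ j ∈ univ.filter (fun j => j ≠ i),
          if o r ∉ H ∧ o r = j ∧ (P r).headD (o r) = i then w r else 0) =
        if o r ∉ H ∧ o r ≠ i ∧ (P r).headD (o r) = i then w r else 0 := by
      intro r
      refine (sum_if_unique (fun j => o r ∉ H ∧ o r = j ∧ (P r).headD (o r) = i) (w r)
        (fun a _ b _ hpa hpb => hpa.2.1.symm.trans hpb.2.1)).trans
        (if_congr ⟨?_, ?_⟩ rfl rfl)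
      · rintro ⟨j, hj, hc⟩
        exact ⟨hc.1, hc.2.1 ▸ (Finset.mem_filter.1 hj).2, hc.2.2⟩
      · rintro ⟨h1, h2, h3⟩
        exact ⟨o r, Finset.mem_filter.2 ⟨Finset.mem_univ _, h2⟩, h1, rfl, h3⟩
    have edist : ∀ r : R,
        (∑ j ∈ univ.filter (fun j => j ≠ i),
          if d r ∉ H ∧ d r = j ∧ (P r).getLastD (d r) = i then w r else 0) =
        if d r ∉ H ∧ d r ≠ i ∧ (P r).getLastD (d r) = i then w r else 0 := by
      intro r
      refine (sum_if_unique (fun j => d r ∉ H ∧ d r = j ∧ (P r).getLastD (d r) = i) (w r)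
        (fun a _ b _ hpa hpb => hpa.2.1.symm.trans hpb.2.1)).trans
        (if_congr ⟨?_, ?_⟩ rfl rfl)
      · rintro ⟨j, hj, hc⟩
        exact ⟨hc.1, hc.2.1 ▸ (Finset.mem_filter.1 hj).2, hc.2.2⟩
      · rintro ⟨h1, h2, h3⟩
        exact ⟨d r, Finset.mem_filter.2 ⟨Finset.mem_univ _, h2⟩, h1, rfl, h3⟩
    have eint_in : ∀ r : R,
        (∑ j ∈ univ.filter (fun j => j ≠ i),
          if (j, i) ∈ (P r).zip (P r).tail then w r else 0) =
        if i ∈ (P r).tail then w r else 0 := by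
      intro r
      refine (sum_if_unique (fun j => (j, i) ∈ (P r).zip (P r).tail) (w r)
        (fun a _ b _ hpa hpb => pred_unique (hnd r) hpa hpb)).trans
        (if_congr ⟨?_, ?_⟩ rfl rfl)
      · rintro ⟨j, _, hc⟩; exact (List.of_mem_zip hc).2
      · intro hmem
        obtain ⟨j, hj⟩ := mem_tail_exists hmem
        exact ⟨j, Finset.mem_filter.2 ⟨Finset.mem_univ _, zip_tail_ne (hnd r) hj⟩, hj⟩
    have eint_out : ∀ r : R,
        (∑ j ∈ univ.filter (fun j => j ≠ i),
          if (i, j) ∈ (P r).zip (P r).tail then w r else 0) =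
        if i ∈ (P r).dropLast then w r else 0 := by
      intro r
      refine (sum_if_unique (fun j => (i, j) ∈ (P r).zip (P r).tail) (w r)
        (fun a _ b _ hpa hpb => succ_unique (hnd r) hpa hpb)).trans
        (if_congr ⟨?_, ?_⟩ rfl rfl)
      · rintro ⟨j, _, hc⟩; exact fst_mem_dropLast hc
      · intro hmem
        obtain ⟨j, hj⟩ := mem_dropLast_exists hmem
        exact ⟨j, Finset.mem_filter.2 ⟨Finset.mem_univ _,
          Ne.symm (zip_tail_ne (hnd r) hj)⟩, hj⟩
    have lhs_eq :
        Odem o w i * (if i ∈ H then (1 : ℝ) else 0) +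
          (∑ j ∈ univ.filter (fun j => j ≠ i),
            (accessFlow H o w P j i + interFlow w P j i)) =
        ∑ r, (if i ∈ P r then w r else 0) := by
      simp only [Odem, accessFlow, interFlow, Finset.sum_mul,
        ← Finset.sum_add_distrib]
      rw [Finset.sum_comm, ← Finset.sum_add_distrib]
      refine Finset.sum_congr rfl fun r _ => ?_
      rw [Finset.sum_add_distrib, eacc r, eint_in r]
      exact side_eq H i (o r) (w r) (P r) (hne r) (hnd r) (hsub r) (hhead r)
    have rhs_eq :
        Ddem d w i * (if i ∈ H then (1 : ℝ) else 0) +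
          (∑ j ∈ univ.filter (fun j => j ≠ i),
            (distFlow H d w P i j + interFlow w P i j)) =
        ∑ r, (if i ∈ P r then w r else 0) := by
      simp only [Ddem, distFlow, interFlow, Finset.sum_mul,
        ← Finset.sum_add_distrib]
      rw [Finset.sum_comm, ← Finset.sum_add_distrib]
      refine Finset.sum_congr rfl fun r _ => ?_
      rw [Finset.sum_add_distrib, edist r, eint_out r]
      exact side_eq' H i (d r) (w r) (P r) (hne r) (hnd r) (hsub r) (hlast r)
    rw [lhs_eq, rhs_eq]
  · -- part (c)
    intro i j hij
    constructor
    · by_cases hx : ∃ r, o r ∉ H ∧ o r = i ∧ (P r).headD (o r) = j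
      · rw [if_pos hx, mul_one]
        simp only [accessFlow, Odem]
        refine Finset.sum_le_sum fun r _ => ?_
        by_cases h : o r ∉ H ∧ o r = i ∧ (P r).headD (o r) = j
        · rw [if_pos h, if_pos h.2.1]
        · rw [if_neg h]
          by_cases h2 : o r = i
          · rw [if_pos h2]; exact hw r
          · rw [if_neg h2]
      · rw [if_neg hx, mul_zero]
        refine le_of_eq (Finset.sum_eq_zero fun r _ => ?_)
        exact if_neg fun h => hx ⟨r, h⟩
    · by_cases hx : ∃ r, d r ∉ H ∧ d r = j ∧ (P r).getLastD (d r) = i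
      · rw [if_pos hx, mul_one]
        simp only [distFlow, Ddem]
        refine Finset.sum_le_sum fun r _ => ?_
        by_cases h : d r ∉ H ∧ d r = j ∧ (P r).getLastD (d r) = i
        · rw [if_pos h, if_pos h.2.1]
        · rw [if_neg h]
          by_cases h2 : d r = j
          · rw [if_pos h2]; exact hw r
          · rw [if_neg h2]
      · rw [if_neg hx, mul_zero]
        refine le_of_eq (Finset.sum_eq_zero fun r _ => ?_)
        exact if_neg fun h => hx ⟨r, h⟩
  · -- part (d)
    intro k m hkm
    by_cases he : (k, m) ∈ E'
    · rw [if_pos he, mul_one]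
      simp only [interFlow, ← Finset.sum_add_distrib]
      refine Finset.sum_le_sum fun r _ => ?_
      by_cases h1 : (k, m) ∈ (P r).zip (P r).tail
      · rw [if_pos h1, if_neg (fun h2 => not_both_zip (hnd r) h1 h2)]
        simp
      · rw [if_neg h1]
        by_cases h2 : (m, k) ∈ (P r).zip (P r).tail
        · rw [if_pos h2]; simp
        · rw [if_neg h2]; simpa using hw r
    · rw [if_neg he, mul_zero]
      refine le_of_eq ?_
      have z1 : interFlow w P k m = 0 :=
        Finset.sum_eq_zero fun r _ => if_neg fun h =>
          he (chain'_rel_of_mem_zip (hch r) h)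
      have z2 : interFlow w P m k = 0 :=
        Finset.sum_eq_zero fun r _ => if_neg fun h =>
          he ((hE' (m, k) (chain'_rel_of_mem_zip (hch r) h)).2.2.2)
      rw [z1, z2, add_zero]
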